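/- Let p, q, r be points in a metric space with |pq|, |pr|, |qr| > 0, and suppose q' lies on a geodesic segment from p to q, with q' → p. If there is a constant α such that |q'r| = |pr| − |pq'|·cos α + o(|pq'|) as q' → p, then the comparison angles ∠̃_0(q' p r) converge to α as q' → p (where cos ∠̃_0(q' p r) = (|pq'|² + |pr|² − |q'r|²)/(2|pq'||pr|)). -/

import Mathlib

open Filter Topology Asymptotics Set

/-- Lemma 1.2: if `γ` is a geodesic segment from `p` to `q`, and the first-variation
expansion `|γ(s) r| = |pr| - s·cos α + o(s)` holds as `s → 0⁺`, then the Euclidean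
comparison angles `∠̃₀ (γ(s)) p r` converge to `α` as `s → 0⁺`. -/
theorem comparison_angle_tendsto_of_first_variation
    {X : Type*} [MetricSpace X] (p q r : X) (γ : ℝ → X) (α : ℝ)
    (hpq : 0 < dist p q) (hpr : 0 < dist p r) (hqr : 0 < dist q r)
    (hγ0 : γ 0 = p) (hγ1 : γ (dist p q) = q)
    (hγ : ∀ s ∈ Icc (0 : ℝ) (dist p q), ∀ t ∈ Icc (0 : ℝ) (dist p q),
      dist (γ s) (γ t) = |s - t|)
    (hα : α ∈ Icc (0 : ℝ) Real.pi)
    (hFV : (fun s => dist (γ s) r - (dist p r - s * Real.cos α))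
      =o[nhdsWithin 0 (Ioi (0 : ℝ))] fun s => s) :
    Tendsto
      (fun s => Real.arccos ((s ^ 2 + dist p r ^ 2 - dist (γ s) r ^ 2) / (2 * s * dist p r)))
      (nhdsWithin 0 (Ioi (0 : ℝ))) (𝓝 α) := by
  set d := dist p r with hd
  set c := Real.cos α with hc
  set e : ℝ → ℝ := fun s => dist (γ s) r - (d - s * c) with he
  have hd0 : d ≠ 0 := ne_of_gt hpr
  set l := nhdsWithin (0 : ℝ) (Ioi (0 : ℝ)) with hl
  have hL : Tendsto (fun s => e s / s) l (𝓝 0) := hFV.tendsto_div_nhds_zero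
  have hs : Tendsto (fun s : ℝ => s) l (𝓝 0) := by
    exact tendsto_id.mono_left (nhdsWithin_le_nhds : l ≤ 𝓝 0)
  have he0 : Tendsto e l (𝓝 0) := by
    have : Tendsto (fun s => e s / s * s) l (𝓝 (0 * 0)) := hL.mul hs
    rw [zero_mul] at this
    refine this.congr' ?_
    filter_upwards [self_mem_nhdsWithin] with s hs'
    have : (s : ℝ) ≠ 0 := ne_of_gt hs'
    field_simp
  have hmain : Tendsto (fun s => (s ^ 2 + d ^ 2 - dist (γ s) r ^ 2) / (2 * s * d))
      l (𝓝 c) := by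
    have key : ∀ᶠ s in l,
        (s ^ 2 + d ^ 2 - dist (γ s) r ^ 2) / (2 * s * d)
          = c + s * (1 - c ^ 2) / (2 * d) - e s / s - (e s / s) * (e s) / (2 * d)
            + c * e s / d := by
      filter_upwards [self_mem_nhdsWithin] with s hs'
      have hs0 : (s : ℝ) ≠ 0 := ne_of_gt hs'
      have hds : dist (γ s) r = d - s * c + e s := by simp [he]
      rw [hds]
      field_simp
      ring
    rw [tendsto_congr' key]
    have h1 : Tendsto (fun s : ℝ => s * (1 - c ^ 2) / (2 * d)) l (𝓝 0) := by
      have := (hs.mul_const (1 - c ^ 2)).div_const (2 * d)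
      simpa using this
    have h2 : Tendsto (fun s => (e s / s) * (e s) / (2 * d)) l (𝓝 0) := by
      have := (hL.mul he0).div_const (2 * d)
      simpa using this
    have h3 : Tendsto (fun s => c * e s / d) l (𝓝 0) := by
      have := (he0.const_mul c).div_const d
      simpa using this
    have hcc : Tendsto (fun _ : ℝ => c) l (𝓝 c) := tendsto_const_nhds
    have := (((hcc.add h1).sub hL).sub h2).add h3
    simpa using this
  have harc : Tendsto Real.arccos (𝓝 c) (𝓝 (Real.arccos c)) :=
    Real.continuous_arccos.tendsto c
  have := harc.comp hmain
  rw [hc, Real.arccos_cos hα.1 hα.2] at this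
  exact this
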